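/- Let A, B, C, D be M×L complex matrices, let b_1, b_2, b_1', b_2' be complex scalars, and let n_1, n_2, n_3 be nonnegative integers. Form the M×(2L+n_1+n_2+n_3) matrices X = [0^{n_1} ∥ b_1·A ∥ 0^{n_2} ∥ b_2·C ∥ 0^{n_3}] and Y = [0^{n_1} ∥ b_1'·B ∥ 0^{n_2} ∥ b_2'·D ∥ 0^{n_3}]. Then for every integer shift τ, C(X,Y)(τ) = b_1·conj(b_1')·C(A,B)(τ) + b_2·conj(b_2')·C(C,D)(τ) + b_2·conj(b_1')·C(C,B)(τ−L−n_2) + b_1·conj(b_2')·C(A,D)(τ+L+n_2). -/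
import Mathlib


open scoped BigOperators ComplexConjugate

noncomputable section

/-- Zero-extension of a finite complex sequence to an integer-indexed sequence. -/
def zext {L : ℕ} (a : Fin L → ℂ) (i : ℤ) : ℂ :=
  if h : 0 ≤ i ∧ i < (L : ℤ) then a ⟨i.toNat, by omega⟩ else 0

/-- Aperiodic cross-correlation function (ACCF) of two length-`L` complex sequences. -/
def accf {L : ℕ} (a b : Fin L → ℂ) (τ : ℤ) : ℂ :=
  ∑ i : Fin L, zext a ((i : ℤ) + τ) * conj (b i)

/-- Periodic cross-correlation function of two length-`N` complex sequences. -/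
def pccf {N : ℕ} (a b : Fin N → ℂ) (τ : ℤ) : ℂ :=
  accf a b τ + accf a b (τ - (N : ℤ))

/-- ACCF of two `M × L` codes (sum of row-wise ACCFs). -/
def codeACCF {M L : ℕ} (C D : Fin M → Fin L → ℂ) (τ : ℤ) : ℂ :=
  ∑ ν : Fin M, accf (C ν) (D ν) τ

/-- Periodic cross-correlation of two `M × N` codes. -/
def codePCCF {M N : ℕ} (C D : Fin M → Fin N → ℂ) (τ : ℤ) : ℂ :=
  ∑ ν : Fin M, pccf (C ν) (D ν) τ

/-- `C : Fin M → (Fin M → Fin L → ℂ)` is an `(M,L)`-CCC. -/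
def IsCCC {M L : ℕ} (C : Fin M → Fin M → Fin L → ℂ) : Prop :=
  (∀ k₁ k₂ : Fin M, ∀ τ : ℤ, (k₁ ≠ k₂ ∨ τ ≠ 0) → codeACCF (C k₁) (C k₂) τ = 0) ∧
  (∀ k : Fin M, codeACCF (C k) (C k) 0 = (M : ℂ) * (L : ℂ))

/-- Starting column of the `p`-th data block in the construction `R`:
the block `b_{p+1}·C_{p+1}` starts after the zero blocks `n_1, …, n_{p+1}` and the
previous `p` data blocks of width `L`. -/
def Roff {P : ℕ} (L : ℕ) (n : Fin (P + 1) → ℕ) (p : Fin P) : ℕ :=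
  (∑ i : Fin (P + 1), if (i : ℕ) ≤ (p : ℕ) then n i else 0) + (p : ℕ) * L

/-- The construction
`R(C_1,…,C_P; b) = [0^{n_1} ∥ b_1·C_1 ∥ 0^{n_2} ∥ b_2·C_2 ∥ … ∥ 0^{n_P} ∥ b_P·C_P ∥ 0^{n_{P+1}}]`,
an `M × (P·L + n)` matrix.  (The data blocks are pairwise disjoint, so the column `x` entry
is `b_p · (C_p)_{r,j}` if `x = Roff p + j` for (the unique) such `p, j`, and `0` otherwise.) -/
def Rmat {M L P : ℕ} (Cs : Fin P → Fin M → Fin L → ℂ) (b : Fin P → ℂ)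
    (n : Fin (P + 1) → ℕ) : Fin M → Fin (P * L + ∑ i, n i) → ℂ :=
  fun r x => ∑ p : Fin P, ∑ j : Fin L,
    if (x : ℕ) = Roff L n p + (j : ℕ) then b p * Cs p r j else 0

/-- For `t = νP + μ` (0-indexed), the index `νP + p` of the `p`-th constituent code. -/
def blockIdx {M P : ℕ} (hP : P ∣ M) (t : Fin M) (p : Fin P) : Fin M :=
  ⟨(t : ℕ) / P * P + (p : ℕ), by
    obtain ⟨k, rfl⟩ := hP
    have hPpos : 0 < P := p.pos
    have h1 : (t : ℕ) / P < k := Nat.div_lt_of_lt_mul t.isLt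
    have h4 : (p : ℕ) < P := p.isLt
    nlinarith [h1, h4]⟩

/-- Condition (13) of the paper: for `j₁ ≠ j₂`, `π_{j₁}(i₁P+μ) ≠ π_{j₂}(i₂P+μ)`;
equivalently, images of indices with the same residue mod `P` differ. -/
def Cond13 {M P : ℕ} (π : Fin P → Equiv.Perm (Fin M)) : Prop :=
  ∀ j₁ j₂ : Fin P, j₁ ≠ j₂ → ∀ s t : Fin M, (s : ℕ) % P = (t : ℕ) % P →
    π j₁ s ≠ π j₂ t

/-- Condition (14) of the paper: if `π_{j₁}(i₁P+μ₁) = π_{j₂}(i₂P+μ₂)` for `j₁ ≠ j₂`, then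
`π_{j₁}(i₁P+μ₁+α) ≠ π_{j₂}(i₂P+μ₂+α)` for every nonzero shift `α` keeping both positions
inside their blocks. -/
def Cond14 {M P : ℕ} (π : Fin P → Equiv.Perm (Fin M)) : Prop :=
  ∀ j₁ j₂ : Fin P, j₁ ≠ j₂ → ∀ s t : Fin M, π j₁ s = π j₂ t →
    ∀ α : ℤ, α ≠ 0 →
      0 ≤ ((s : ℕ) : ℤ) % (P : ℤ) + α → ((s : ℕ) : ℤ) % (P : ℤ) + α < (P : ℤ) →
      0 ≤ ((t : ℕ) : ℤ) % (P : ℤ) + α → ((t : ℕ) : ℤ) % (P : ℤ) + α < (P : ℤ) →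
      ∀ s' t' : Fin M, ((s' : ℕ) : ℤ) = ((s : ℕ) : ℤ) + α → ((t' : ℕ) : ℤ) = ((t : ℕ) : ℤ) + α →
        π j₁ s' ≠ π j₂ t'


lemma zext_coe {L : ℕ} (a : Fin L → ℂ) (i : Fin L) : zext a ((i : ℕ) : ℤ) = a i := by
  unfold zext
  rw [dif_pos ⟨Int.natCast_nonneg _, by exact_mod_cast i.isLt⟩]
  congr 1

lemma zext_of_neg {L : ℕ} (a : Fin L → ℂ) (x : ℤ) (h : ¬(0 ≤ x ∧ x < (L : ℤ))) :
    zext a x = 0 := dif_neg h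

lemma zext_of_pos {L : ℕ} (a : Fin L → ℂ) (x : ℤ) (h : 0 ≤ x ∧ x < (L : ℤ)) :
    zext a x = a ⟨x.toNat, by omega⟩ := dif_pos h

lemma zext_scale {L : ℕ} (c : ℂ) (a : Fin L → ℂ) (x : ℤ) :
    zext (fun j => c * a j) x = c * zext a x := by
  unfold zext; split <;> simp

lemma sum_ite_block {L : ℕ} (f : Fin L → ℂ) (m c : ℕ) :
    (∑ j : Fin L, if m = c + (j : ℕ) then f j else 0) = zext f ((m : ℤ) - (c : ℤ)) := by
  by_cases h : c ≤ m ∧ m < c + L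
  · have hL : m - c < L := by omega
    rw [Finset.sum_eq_single (⟨m - c, hL⟩ : Fin L)]
    · rw [if_pos (by simp; omega)]
      unfold zext
      rw [dif_pos (by constructor <;> omega)]
      congr 1
      all_goals exact Fin.ext (by simp; try omega)
    · intro j _ hj
      rw [if_neg]
      intro hm
      exact hj (Fin.ext (by simp; omega))
    · intro h'; exact absurd (Finset.mem_univ _) h'
  · rw [Finset.sum_eq_zero, eq_comm]
    · unfold zext
      rw [dif_neg]
      omega
    · intro j _
      rw [if_neg]
      have := j.isLt
      omega

lemma key {L N : ℕ} (P Q : Fin L → ℂ) (o₁ o₂ : ℤ) (h0 : 0 ≤ o₂) (h : o₂ + (L : ℤ) ≤ (N : ℤ))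
    (σ τ : ℤ) (hτ : τ = σ - o₁ + o₂) :
    (∑ i : Fin N, zext P ((i : ℤ) + σ - o₁) * conj (zext Q ((i : ℤ) - o₂))) = accf P Q τ := by
  have hLN : o₂.toNat + L ≤ N := by omega
  set f : Fin L → Fin N := fun j => ⟨o₂.toNat + j, by have := j.isLt; omega⟩ with hf
  have hinj : ∀ x ∈ Finset.univ, ∀ y ∈ Finset.univ, f x = f y → x = y := by
    intro a _ b _ hab
    have : o₂.toNat + (a:ℕ) = o₂.toNat + (b:ℕ) := congrArg Fin.val hab
    exact Fin.ext (by omega)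
  rw [← Finset.sum_subset (Finset.subset_univ (Finset.image f Finset.univ)),
      Finset.sum_image hinj]
  · unfold accf
    apply Finset.sum_congr rfl
    intro j _
    have h1 : ((f j : Fin N) : ℤ) + σ - o₁ = (j : ℤ) + τ := by
      simp only [hf]; push_cast; omega
    have h2 : ((f j : Fin N) : ℤ) - o₂ = ((j : ℕ) : ℤ) := by
      simp only [hf]; push_cast; omega
    rw [h1, h2, zext_coe]
  · intro i _ hi
    have hni : ¬ (0 ≤ (i : ℤ) - o₂ ∧ (i : ℤ) - o₂ < (L : ℤ)) := by
      intro hc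
      apply hi
      simp only [Finset.mem_image, Finset.mem_univ, true_and]
      refine ⟨⟨((i : ℤ) - o₂).toNat, by omega⟩, Fin.ext ?_⟩
      simp only [hf]
      omega
    rw [show zext Q ((i : ℤ) - o₂) = 0 from dif_neg hni]
    simp

lemma Roff_zero (L n₁ n₂ n₃ : ℕ) : Roff L ![n₁, n₂, n₃] (0 : Fin 2) = n₁ := by
  simp [Roff, Fin.sum_univ_three, Fin.le_def]

lemma Roff_one (L n₁ n₂ n₃ : ℕ) : Roff L ![n₁, n₂, n₃] (1 : Fin 2) = n₁ + n₂ + L := by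
  simp [Roff, Fin.sum_univ_three, Fin.le_def]

lemma zext_Rmat_two {M L : ℕ} (A C : Fin M → Fin L → ℂ) (b₁ b₂ : ℂ) (n₁ n₂ n₃ : ℕ)
    (r : Fin M) (x : ℤ) :
    zext (Rmat ![A, C] ![b₁, b₂] ![n₁, n₂, n₃] r) x
      = b₁ * zext (A r) (x - (n₁ : ℤ)) + b₂ * zext (C r) (x - ((n₁ : ℤ) + L + n₂)) := by
  have hs : (∑ i, (![n₁, n₂, n₃]) i) = n₁ + n₂ + n₃ := by simp [Fin.sum_univ_three]
  by_cases h : 0 ≤ x ∧ x < ((2 * L + ∑ i, (![n₁, n₂, n₃]) i : ℕ) : ℤ)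
  · rw [zext_of_pos _ _ h]
    simp only [Rmat, Fin.sum_univ_two, Fin.isValue, Matrix.cons_val_zero, Matrix.cons_val_one,
      Matrix.head_cons]
    rw [Roff_zero, Roff_one, sum_ite_block (fun j => b₁ * A r j),
      sum_ite_block (fun j => b₂ * C r j), zext_scale, zext_scale]
    have hx : ((x.toNat : ℕ) : ℤ) = x := Int.toNat_of_nonneg h.1
    rw [hx]
    congr 2
    push_cast
    ring
  · rw [zext_of_neg _ _ h, zext_of_neg, zext_of_neg]
    · ring_nf
    · rw [hs] at h; omega
    · rw [hs] at h; omega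


/-- For `X = [0^{n₁} ∥ b₁·A ∥ 0^{n₂} ∥ b₂·C ∥ 0^{n₃}]` and
`Y = [0^{n₁} ∥ b₁'·B ∥ 0^{n₂} ∥ b₂'·D ∥ 0^{n₃}]` (both `M × (2L+n₁+n₂+n₃)` matrices):
`C(X,Y)(τ) = b₁·conj(b₁')·C(A,B)(τ) + b₂·conj(b₂')·C(C,D)(τ)
  + b₂·conj(b₁')·C(C,B)(τ−L−n₂) + b₁·conj(b₂')·C(A,D)(τ+L+n₂)`. -/
theorem codeACCF_Rmat_two_blocks {M L : ℕ} (A B C D : Fin M → Fin L → ℂ)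
    (b₁ b₂ b₁' b₂' : ℂ) (n₁ n₂ n₃ : ℕ) (τ : ℤ) :
    codeACCF (Rmat ![A, C] ![b₁, b₂] ![n₁, n₂, n₃])
        (Rmat ![B, D] ![b₁', b₂'] ![n₁, n₂, n₃]) τ =
      b₁ * conj b₁' * codeACCF A B τ + b₂ * conj b₂' * codeACCF C D τ +
      b₂ * conj b₁' * codeACCF C B (τ - (L : ℤ) - (n₂ : ℤ)) +
      b₁ * conj b₂' * codeACCF A D (τ + (L : ℤ) + (n₂ : ℤ)) := by
  have hs : (∑ i, (![n₁, n₂, n₃]) i) = n₁ + n₂ + n₃ := by simp [Fin.sum_univ_three]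
  have hrow : ∀ ν : Fin M,
      accf (Rmat ![A, C] ![b₁, b₂] ![n₁, n₂, n₃] ν)
        (Rmat ![B, D] ![b₁', b₂'] ![n₁, n₂, n₃] ν) τ =
      b₁ * conj b₁' * accf (A ν) (B ν) τ + b₂ * conj b₂' * accf (C ν) (D ν) τ +
      b₂ * conj b₁' * accf (C ν) (B ν) (τ - (L : ℤ) - (n₂ : ℤ)) +
      b₁ * conj b₂' * accf (A ν) (D ν) (τ + (L : ℤ) + (n₂ : ℤ)) := by
    intro ν
    have hy : ∀ i : Fin (2 * L + ∑ i, (![n₁, n₂, n₃]) i),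
        Rmat ![B, D] ![b₁', b₂'] ![n₁, n₂, n₃] ν i
          = b₁' * zext (B ν) ((i : ℤ) - (n₁ : ℤ))
            + b₂' * zext (D ν) ((i : ℤ) - ((n₁ : ℤ) + L + n₂)) := by
      intro i
      rw [← zext_coe (Rmat ![B, D] ![b₁', b₂'] ![n₁, n₂, n₃] ν) i, zext_Rmat_two]
    have e1 : accf (Rmat ![A, C] ![b₁, b₂] ![n₁, n₂, n₃] ν)
        (Rmat ![B, D] ![b₁', b₂'] ![n₁, n₂, n₃] ν) τ
        = ∑ k : Fin (2 * L + ∑ i, (![n₁, n₂, n₃]) i),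
            (b₁ * conj b₁' * (zext (A ν) ((k : ℤ) + τ - (n₁ : ℤ)) * conj (zext (B ν) ((k : ℤ) - (n₁ : ℤ))))
            + b₂ * conj b₂' * (zext (C ν) ((k : ℤ) + τ - ((n₁ : ℤ) + L + n₂)) * conj (zext (D ν) ((k : ℤ) - ((n₁ : ℤ) + L + n₂))))
            + b₂ * conj b₁' * (zext (C ν) ((k : ℤ) + τ - ((n₁ : ℤ) + L + n₂)) * conj (zext (B ν) ((k : ℤ) - (n₁ : ℤ))))
            + b₁ * conj b₂' * (zext (A ν) ((k : ℤ) + τ - (n₁ : ℤ)) * conj (zext (D ν) ((k : ℤ) - ((n₁ : ℤ) + L + n₂))))) := by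
      unfold accf
      apply Finset.sum_congr rfl
      intro k _
      rw [zext_Rmat_two, hy k]
      simp only [map_add, map_mul]
      ring
    rw [e1]
    simp only [Finset.sum_add_distrib, ← Finset.mul_sum]
    rw [key (A ν) (B ν) (n₁ : ℤ) (n₁ : ℤ) (by positivity) (by push_cast [hs]; omega) τ τ (by ring),
      key (C ν) (D ν) ((n₁ : ℤ) + L + n₂) ((n₁ : ℤ) + L + n₂) (by positivity) (by push_cast [hs]; omega) τ τ (by ring),
      key (C ν) (B ν) ((n₁ : ℤ) + L + n₂) (n₁ : ℤ) (by positivity) (by push_cast [hs]; omega) τ (τ - (L : ℤ) - (n₂ : ℤ)) (by ring),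
      key (A ν) (D ν) (n₁ : ℤ) ((n₁ : ℤ) + L + n₂) (by positivity) (by push_cast [hs]; omega) τ (τ + (L : ℤ) + (n₂ : ℤ)) (by ring)]
  simp only [codeACCF, hrow, Finset.sum_add_distrib, ← Finset.mul_sum]

end
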